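/- Let T ∈ L(E) be Moore–Penrose invertible and W an orthogonally complemented reducing submodule for T. If 0 is not in the C*-numerical range ω(T) = {⟨Tx, x⟩ : x ∈ E, ‖x‖ = 1}, then W is a reducing submodule for the Moore–Penrose inverse T† of T. In particular T(W) = W. -/

import Mathlib

open scoped RightActions

/-- The Hilbert C*-module class as it stood in Mathlib (Dec 2024): a right `A`-module
(via `SMul Aᵐᵒᵖ E`) with an `A`-valued inner product, `A`-linear on the right. -/
class CStarModuleRight (A : outParam <| Type*) (E : Type*) [NonUnitalSemiring A] [StarRing A]
    [Module ℂ A] [AddCommGroup E] [Module ℂ E] [PartialOrder A] [SMul Aᵐᵒᵖ E] [Norm A] [Norm E]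
    extends Inner A E where
  inner_add_right {x} {y} {z} : inner x (y + z) = inner x y + inner x z
  inner_self_nonneg {x} : 0 ≤ inner x x
  inner_self {x} : inner x x = 0 ↔ x = 0
  inner_op_smul_right {a : A} {x y : E} : inner x (y <• a) = inner x y * a
  inner_smul_right_complex {z : ℂ} {x} {y} : inner x (z • y) = z • inner x y
  star_inner x y : star (inner x y) = inner y x
  norm_eq_sqrt_norm_inner_self x : ‖x‖ = √‖inner x x‖

section

variable {A : Type*} [CStarAlgebra A] [PartialOrder A] [StarOrderedRing A]
variable {E : Type*} [NormedAddCommGroup E] [NormedSpace ℂ E] [SMul Aᵐᵒᵖ E]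
  [CStarModuleRight A E] [CompleteSpace E]

local notation "⟪" x ", " y "⟫" => inner (𝕜 := A) x y

/-- `T` is a bounded adjointable `A`-linear operator with adjoint `T'`. -/
def IsAdjointableWith (T T' : E →L[ℂ] E) : Prop :=
  (∀ (a : A) (x : E), T (x <• a) = T x <• a) ∧
  ∀ x y : E, ⟪T x, y⟫ = ⟪x, T' y⟫

/-- The orthogonal complement of a subset of a Hilbert C*-module. -/
def ortho (W : Set E) : Set E := {y | ∀ x ∈ W, ⟪x, y⟫ = (0 : A)}

/-- `W` is orthogonally complemented in `E`. -/
def OrthoComplemented (W : Set E) : Prop :=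
  ∀ z : E, ∃ x ∈ W, ∃ y ∈ ortho (A := A) W, z = x + y

/-- `W` is a closed `A`-submodule of `E`. -/
def IsClosedSubmodule (W : Submodule ℂ E) : Prop :=
  IsClosed (W : Set E) ∧ ∀ (a : A), ∀ x ∈ W, x <• a ∈ W

/-- An orthogonal projection in `L(E)`: an `A`-linear, idempotent, self-adjoint operator. -/
def IsOrthoProjection (P : E →L[ℂ] E) : Prop :=
  (∀ (a : A) (x : E), P (x <• a) = P x <• a) ∧ P.comp P = P ∧
  ∀ x y : E, ⟪P x, y⟫ = ⟪x, P y⟫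

/-- A "compact" operator on a Hilbert C*-module: a member of the closure of the span
of the rank-one operators `z ↦ x ⟨y, z⟩`. -/
def IsCompactOp (K : E →L[ℂ] E) : Prop :=
  K ∈ closure (Submodule.span ℂ
    {S : E →L[ℂ] E | ∃ x y : E, ∀ z : E, S z = x <• ⟪y, z⟫} : Set (E →L[ℂ] E))

/-- `E` is a finitely generated Hilbert `A`-module. -/
def IsFinGen : Prop :=
  ∃ (n : ℕ) (g : Fin n → E), ∀ x : E,
    x ∈ Submodule.span ℂ {y : E | ∃ (i : Fin n) (a : A), y = g i <• a}

/-- `T` is invertible in `L(E)`, the bounded adjointable operators. -/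
def InvertibleInL (T : E →L[ℂ] E) : Prop :=
  ∃ S S' : E →L[ℂ] E, IsAdjointableWith (A := A) S S' ∧ S.comp T = 1 ∧ T.comp S = 1

@[simp] theorem cmr_inner_zero_right (x : E) : ⟪x, (0 : E)⟫ = (0 : A) := by
  have h := CStarModuleRight.inner_add_right (A := A) (x := x) (y := (0 : E)) (z := 0)
  simpa using h

@[simp] theorem cmr_inner_zero_left (y : E) : ⟪(0 : E), y⟫ = (0 : A) := by
  rw [← CStarModuleRight.star_inner y (0 : E), cmr_inner_zero_right, star_zero]

theorem cmr_inner_sub_right (x y z : E) : ⟪x, y - z⟫ = ⟪x, y⟫ - ⟪x, z⟫ :=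
  map_sub (AddMonoidHom.mk' (fun y => ⟪x, y⟫)
    (fun a b => CStarModuleRight.inner_add_right)) y z

theorem cmr_inner_smul_left_complex (z : ℂ) (x y : E) : ⟪z • x, y⟫ = star z • ⟪x, y⟫ := by
  rw [← CStarModuleRight.star_inner y (z • x), CStarModuleRight.inner_smul_right_complex,
    star_smul, CStarModuleRight.star_inner]

/-- If `T` is Moore–Penrose invertible with Moore–Penrose inverse `T†`, `W` is an orthogonally
complemented reducing submodule for `T`, and `0` is not in the C*-numerical range of `T`, then
`W` is a reducing submodule for `T†`; in particular `T(W) = W`. -/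
theorem stmt12 (T T' Td : E →L[ℂ] E) (hT : IsAdjointableWith (A := A) T T')
    (hTd : ∃ Td' : E →L[ℂ] E, IsAdjointableWith (A := A) Td Td')
    (h1 : T.comp (Td.comp T) = T) (h2 : Td.comp (T.comp Td) = Td)
    (h3 : ∀ x y : E, ⟪T (Td x), y⟫ = ⟪x, T (Td y)⟫)
    (h4 : ∀ x y : E, ⟪Td (T x), y⟫ = ⟪x, Td (T y)⟫)
    (W : Submodule ℂ E) (hWcl : IsClosedSubmodule (A := A) W)
    (hWc : OrthoComplemented (A := A) (W : Set E))
    (hinv : ∀ x ∈ W, T x ∈ W)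
    (hinv' : ∀ y ∈ ortho (A := A) (W : Set E), T y ∈ ortho (A := A) (W : Set E))
    (hnum : ∀ x : E, ‖x‖ = 1 → ⟪T x, x⟫ ≠ (0 : A)) :
    (∀ x ∈ W, Td x ∈ W) ∧
    (∀ y ∈ ortho (A := A) (W : Set E), Td y ∈ ortho (A := A) (W : Set E)) ∧
    (⇑T '' (W : Set E) = (W : Set E)) := by
  -- First show `Td ∘ T = id` and `T ∘ Td = id`, using that `0 ∉ ω(T)`.
  have key : ∀ y : E, ⟪T y, y⟫ = (0 : A) → y = 0 := by
    intro y hy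
    by_contra hy0
    have hny : ‖y‖ ≠ 0 := fun h => hy0 (norm_eq_zero.mp h)
    set u : E := ((‖y‖ : ℂ)⁻¹) • y with hu
    have hnu : ‖u‖ = 1 := by
      rw [hu, norm_smul]
      simp [abs_of_nonneg, norm_nonneg, inv_mul_cancel₀ hny]
    refine hnum u hnu ?_
    rw [hu, map_smul, cmr_inner_smul_left_complex,
      CStarModuleRight.inner_smul_right_complex, hy]
    simp
  have hTdT : ∀ x : E, Td (T x) = x := by
    intro x
    have h0 : T (x - Td (T x)) = 0 := by
      have := congrFun (congrArg (fun S : E →L[ℂ] E => (S : E → E)) h1) x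
      simp only [ContinuousLinearMap.comp_apply] at this
      simp [map_sub, this]
    have := key (x - Td (T x)) (by rw [h0]; simp)
    exact (sub_eq_zero.mp this).symm
  have hTTd : ∀ x : E, T (Td x) = x := by
    intro x
    have hTdy : Td (x - T (Td x)) = 0 := by
      have := congrFun (congrArg (fun S : E →L[ℂ] E => (S : E → E)) h2) x
      simp only [ContinuousLinearMap.comp_apply] at this
      simp [map_sub, this]
    set y := x - T (Td x) with hy
    have h0 : ⟪T y, y⟫ = (0 : A) := by
      have hcomp : T (Td (T y)) = T y := by
        have := congrFun (congrArg (fun S : E →L[ℂ] E => (S : E → E)) h1) y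
        simpa using this
      calc ⟪T y, y⟫ = ⟪T (Td (T y)), y⟫ := by rw [hcomp]
        _ = ⟪T y, T (Td y)⟫ := h3 (T y) y
        _ = 0 := by rw [hTdy]; simp
    have := key y h0
    rw [hy] at this
    exact (sub_eq_zero.mp this).symm
  -- W ∩ ortho W = 0
  have hdisj : ∀ z : E, z ∈ W → z ∈ ortho (A := A) (W : Set E) → z = 0 := by
    intro z hz hz'
    have : ⟪z, z⟫ = (0 : A) := hz' z hz
    exact CStarModuleRight.inner_self.mp this
  have horthosub : ∀ u v : E, u ∈ ortho (A := A) (W : Set E) →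
      v ∈ ortho (A := A) (W : Set E) → u - v ∈ ortho (A := A) (W : Set E) := by
    intro u v hu hv x hx
    rw [cmr_inner_sub_right, hu x hx, hv x hx, sub_zero]
  have hTdW : ∀ x ∈ W, Td x ∈ W := by
    intro x hx
    obtain ⟨w, hw, yo, hyo, hdec⟩ := hWc (Td x)
    have hx' : x = T w + T yo := by
      have := hTTd x
      rw [hdec, map_add] at this
      exact this.symm
    have h1' : x - T w ∈ W := W.sub_mem hx (hinv w hw)
    have h2' : x - T w = T yo := by rw [hx']; abel
    have h3' : T yo ∈ ortho (A := A) (W : Set E) := hinv' yo hyo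
    have hTy0 : T yo = 0 := hdisj _ (h2' ▸ h1') h3'
    have hyo0 : yo = 0 := by
      have := hTdT yo
      rw [hTy0, map_zero] at this
      exact this.symm
    rw [hdec, hyo0, add_zero]
    exact hw
  have hTdWo : ∀ y ∈ ortho (A := A) (W : Set E), Td y ∈ ortho (A := A) (W : Set E) := by
    intro y hy
    obtain ⟨w, hw, yo, hyo, hdec⟩ := hWc (Td y)
    have hy' : y = T w + T yo := by
      have := hTTd y
      rw [hdec, map_add] at this
      exact this.symm
    have h1' : y - T yo ∈ ortho (A := A) (W : Set E) :=
      horthosub y (T yo) hy (hinv' yo hyo)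
    have h2' : y - T yo = T w := by rw [hy']; abel
    have hTw0 : T w = 0 := hdisj _ (hinv w hw) (h2' ▸ h1')
    have hw0 : w = 0 := by
      have := hTdT w
      rw [hTw0, map_zero] at this
      exact this.symm
    rw [hdec, hw0, zero_add]
    exact hyo
  refine ⟨hTdW, hTdWo, ?_⟩
  apply Set.eq_of_subset_of_subset
  · rintro _ ⟨x, hx, rfl⟩
    exact hinv x hx
  · intro x hx
    exact ⟨Td x, hTdW x hx, hTTd x⟩

end
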